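/- arXiv:1009.1565 — 8 statements merged into one kernel-verified Lean document; each statement's English description precedes it below -/
import Mathlib

section
/- Let A be a family of connected subsets of a compact metric space X, and let ∼_A be the finest closed equivalence relation respecting A. Then every ∼_A-class is connected (hence a subcontinuum of X), and the quotient map X → X/∼_A is monotone. -/
open Set Filter Metric Topology Function

/-- A relation on a topological space is closed if its graph is closed. -/
def ClosedRel {Y : Type*} [TopologicalSpace Y] (r : Y → Y → Prop) : Prop :=
  IsClosed {p : Y × Y | r p.1 p.2}

/-- A relation respects a family `A` of subsets if it is closed and each member of `A`
is contained in a single class. -/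
def Respects {Y : Type*} [TopologicalSpace Y] (A : Set (Set Y)) (r : Y → Y → Prop) : Prop :=
  ClosedRel r ∧ ∀ a ∈ A, ∀ x ∈ a, ∀ y ∈ a, r x y

/-- The finest closed equivalence relation respecting `A`: the intersection of all
closed equivalence relations respecting `A`. -/
def finestRel {Y : Type*} [TopologicalSpace Y] (A : Set (Set Y)) : Y → Y → Prop :=
  fun x y => ∀ r : Y → Y → Prop, Equivalence r → Respects A r → r x y

/-- A limit continuum: a subcontinuum which is the Hausdorff limit of a sequence of
pairwise disjoint subcontinua. -/
def IsLimCont {Y : Type*} [MetricSpace Y] (C : Set Y) : Prop :=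
  IsCompact C ∧ IsConnected C ∧
  ∃ F : ℕ → Set Y, (∀ n, IsCompact (F n) ∧ IsConnected (F n)) ∧
    Pairwise (Disjoint on F) ∧
    Tendsto (fun n => EMetric.hausdorffEdist (F n) C) atTop (nhds 0)

/-- Finitely Suslinian: every family of pairwise disjoint subcontinua of diameter at least
`ε > 0` is finite. -/
def FinSus (Y : Type*) [MetricSpace Y] : Prop :=
  ∀ ε : ℝ, 0 < ε → ∀ S : Set (Set Y),
    (∀ C ∈ S, IsCompact C ∧ IsConnected C ∧ ε ≤ Metric.diam C) →
    S.Pairwise Disjoint → S.Finite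

/-- A subcontinuum of the subset `Z`. -/
def SubcontIn {E : Type*} [MetricSpace E] (Z C : Set E) : Prop :=
  C ⊆ Z ∧ IsCompact C ∧ IsConnected C

/-- A limit continuum of the subset `Z`. -/
def LimContIn {E : Type*} [MetricSpace E] (Z C : Set E) : Prop :=
  SubcontIn Z C ∧ ∃ F : ℕ → Set E, (∀ n, SubcontIn Z (F n)) ∧
    Pairwise (Disjoint on F) ∧
    Tendsto (fun n => EMetric.hausdorffEdist (F n) C) atTop (nhds 0)

/-- The subset `Z` is finitely Suslinian. -/
def FinSusIn {E : Type*} [MetricSpace E] (Z : Set E) : Prop :=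
  ∀ ε : ℝ, 0 < ε → ∀ S : Set (Set E),
    (∀ C ∈ S, SubcontIn Z C ∧ ε ≤ Metric.diam C) → S.Pairwise Disjoint → S.Finite

/-- A planar compactum is unshielded if it is the boundary of the unbounded component of
its complement. -/
def Unshielded (X : Set ℂ) : Prop :=
  ∀ z, z ∉ X → ¬Bornology.IsBounded (connectedComponentIn Xᶜ z) →
    X = frontier (connectedComponentIn Xᶜ z)

section Aux
variable {X : Type*} [MetricSpace X] [CompactSpace X] (A : Set (Set X))

lemma finestRel_equivalence : Equivalence (finestRel A) :=
  ⟨fun x r hr _ => hr.refl x,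
   fun h r hr hrr => hr.symm (h r hr hrr),
   fun h1 h2 r hr hrr => hr.trans (h1 r hr hrr) (h2 r hr hrr)⟩

lemma finestRel_closed : ClosedRel (finestRel A) := by
  have : {p : X × X | finestRel A p.1 p.2} =
      ⋂ r : {r : X → X → Prop // Equivalence r ∧ Respects A r},
        {p : X × X | r.1 p.1 p.2} := by
    ext p
    simp only [mem_iInter, mem_setOf_eq, Subtype.forall, finestRel]
    exact ⟨fun h r hr => h r hr.1 hr.2, fun h r h1 h2 => h r ⟨h1, h2⟩⟩
  rw [ClosedRel, this]
  exact isClosed_iInter fun r => r.2.2.1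

lemma finestRel_respects : Respects A (finestRel A) :=
  ⟨finestRel_closed A, fun a ha x hx y hy r hr hrr => hrr.2 a ha x hx y hy⟩

/-- Classes of the finest relation. -/
noncomputable def fCls (x : X) : Set X := {y | finestRel A x y}

lemma fCls_isClosed (x : X) : IsClosed (fCls A x) := by
  have : fCls A x = (fun y => ((x, y) : X × X)) ⁻¹' {p : X × X | finestRel A p.1 p.2} := rfl
  rw [this]
  exact (finestRel_closed A).preimage (by fun_prop)

lemma fCls_eq_of_rel {x y : X} (h : finestRel A x y) : fCls A x = fCls A y := by
  ext z
  constructor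
  · intro hz
    exact (finestRel_equivalence A).trans ((finestRel_equivalence A).symm h) hz
  · intro hz
    exact (finestRel_equivalence A).trans h hz

/-- The refined relation: same class and same connected component of the class. -/
def eRel (x y : X) : Prop :=
  finestRel A x y ∧ y ∈ connectedComponentIn (fCls A x) x

lemma eRel_closed : ClosedRel (eRel A) := by
  rw [ClosedRel, ← isOpen_compl_iff, isOpen_iff_mem_nhds]
  rintro ⟨x, y⟩ hp
  simp only [mem_compl_iff, mem_setOf_eq, eRel, not_and_or] at hp
  rcases hp with h | h
  · -- ¬ finestRel A x y
    refine mem_of_superset (IsOpen.mem_nhds ((finestRel_closed A).isOpen_compl) h) ?_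
    intro q hq hq'
    exact hq hq'.1
  · by_cases hR : finestRel A x y
    swap
    · refine mem_of_superset (IsOpen.mem_nhds ((finestRel_closed A).isOpen_compl) hR) ?_
      intro q hq hq'
      exact hq hq'.1
    -- y is in the class of x but not its connected component
    set C := fCls A x with hC
    have hxC : x ∈ C := (finestRel_equivalence A).refl x
    have hyC : y ∈ C := hR
    have hCc : IsCompact C := (fCls_isClosed A x).isCompact
    haveI : CompactSpace C := isCompact_iff_compactSpace.mp hCc
    -- find a clopen separation of C
    have hy' : (⟨y, hyC⟩ : C) ∉ connectedComponent (⟨x, hxC⟩ : C) := by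
      intro hmem
      apply h
      rw [connectedComponentIn_eq_image hxC]
      exact ⟨⟨y, hyC⟩, hmem, rfl⟩
    rw [connectedComponent_eq_iInter_isClopen] at hy'
    simp only [mem_iInter, Subtype.forall, not_forall] at hy'
    obtain ⟨Z, ⟨hZclopen, hxZ⟩, hyZ⟩ := hy'
    set K : Set X := (↑) '' Z with hK
    set L : Set X := (↑) '' Zᶜ with hL
    have hKc : IsCompact K := (hZclopen.isClosed.isCompact).image continuous_subtype_val
    have hLc : IsCompact L := ((hZclopen.compl.isClosed).isCompact).image continuous_subtype_val
    have hKL : Disjoint K L := by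
      rw [disjoint_iff_inter_eq_empty]
      ext z
      simp only [hK, hL, mem_inter_iff, mem_image, mem_compl_iff, mem_empty_iff_false, iff_false]
      rintro ⟨⟨a, ha, rfl⟩, ⟨b, hb, hab⟩⟩
      exact hb (by rwa [Subtype.val_injective hab])
    obtain ⟨U, V, hU, hV, hKU, hLV, hUV⟩ := SeparatedNhds.of_isCompact_isCompact hKc hLc hKL
    have hCUV : C ⊆ U ∪ V := by
      intro z hz
      by_cases hzZ : (⟨z, hz⟩ : C) ∈ Z
      · exact Or.inl (hKU ⟨⟨z, hz⟩, hzZ, rfl⟩)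
      · exact Or.inr (hLV ⟨⟨z, hz⟩, hzZ, rfl⟩)
    -- upper semicontinuity: the set of points whose class lies in U ∪ V is open
    set O : Set X := {x' | ∀ z, finestRel A x' z → z ∈ U ∪ V} with hO
    have hOopen : IsOpen O := by
      rw [← isClosed_compl_iff]
      have : Oᶜ = Prod.fst '' ({p : X × X | finestRel A p.1 p.2} ∩ (univ ×ˢ (U ∪ V)ᶜ)) := by
        ext z
        simp only [hO, mem_compl_iff, mem_setOf_eq, not_forall, mem_image, mem_inter_iff,
          mem_prod, mem_univ, true_and]
        constructor
        · rintro ⟨w, hw, hw'⟩; exact ⟨(z, w), ⟨hw, hw'⟩, rfl⟩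
        · rintro ⟨⟨a, b⟩, ⟨h1, h2⟩, rfl⟩; exact ⟨b, h1, h2⟩
      rw [this]
      have hcl : IsClosed ({p : X × X | finestRel A p.1 p.2} ∩ (univ ×ˢ (U ∪ V)ᶜ)) :=
        (finestRel_closed A).inter (isClosed_univ.prod (hU.union hV).isClosed_compl)
      exact (hcl.isCompact.image continuous_fst).isClosed
    have hxO : x ∈ O := fun z hz => hCUV hz
    have hxU : x ∈ U := hKU ⟨⟨x, hxC⟩, hxZ, rfl⟩
    have hyV : y ∈ V := hLV ⟨⟨y, hyC⟩, hyZ, rfl⟩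
    refine mem_of_superset (IsOpen.mem_nhds (((hU.inter hOopen).prod hV))
      ⟨⟨hxU, hxO⟩, hyV⟩) ?_
    rintro ⟨x', y'⟩ ⟨⟨hx'U, hx'O⟩, hy'V⟩ ⟨hR', hcomp⟩
    -- the connected component of x' in its class would meet both U and V
    set S := connectedComponentIn (fCls A x') x' with hS
    have hx'cls : x' ∈ fCls A x' := (finestRel_equivalence A).refl x'
    have hSconn : IsPreconnected S := isPreconnected_connectedComponentIn
    have hSsub : S ⊆ U ∪ V := fun z hz =>
      hx'O z (connectedComponentIn_subset _ _ hz)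
    have hx'S : x' ∈ S := mem_connectedComponentIn hx'cls
    obtain ⟨w, hwS, hwU, hwV⟩ := hSconn U V hU hV hSsub ⟨x', hx'S, hx'U⟩ ⟨y', hcomp, hy'V⟩
    exact absurd (hUV.ne_of_mem hwU hwV) (fun hne => hne rfl)

lemma eRel_equivalence : Equivalence (eRel A) := by
  constructor
  · intro x
    exact ⟨(finestRel_equivalence A).refl x,
      mem_connectedComponentIn ((finestRel_equivalence A).refl x)⟩
  · rintro x y ⟨hR, hc⟩
    refine ⟨(finestRel_equivalence A).symm hR, ?_⟩
    rw [← fCls_eq_of_rel A hR, ← connectedComponentIn_eq hc]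
    exact mem_connectedComponentIn ((finestRel_equivalence A).refl x)
  · rintro x y z ⟨hRxy, hcy⟩ ⟨hRyz, hcz⟩
    refine ⟨(finestRel_equivalence A).trans hRxy hRyz, ?_⟩
    rw [connectedComponentIn_eq hcy, fCls_eq_of_rel A hRxy]
    exact hcz

lemma eRel_respects (hA : ∀ a ∈ A, IsConnected a) : Respects A (eRel A) := by
  refine ⟨eRel_closed A, fun a ha x hx y hy => ?_⟩
  have hR : finestRel A x y := (finestRel_respects A).2 a ha x hx y hy
  refine ⟨hR, ?_⟩
  have hsub : a ⊆ fCls A x := fun z hz => (finestRel_respects A).2 a ha x hx z hz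
  exact (hA a ha).isPreconnected.subset_connectedComponentIn hx hsub hy

lemma finestRel_class_connected (hA : ∀ a ∈ A, IsConnected a) (x : X) :
    IsConnected {y | finestRel A x y} := by
  have hxC : x ∈ fCls A x := (finestRel_equivalence A).refl x
  have key : {y | finestRel A x y} = connectedComponentIn (fCls A x) x := by
    apply Subset.antisymm
    · intro y hy
      exact (hy (eRel A) (eRel_equivalence A) (eRel_respects A hA)).2
    · exact connectedComponentIn_subset _ _
  rw [key]
  exact isConnected_connectedComponentIn_iff.mpr hxC

end Aux

/-- if `A` consists of connected sets then all classes of the finest closed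
equivalence relation respecting `A` are connected, and the quotient map is monotone. -/
theorem finestRel_classes_connected {X : Type*} [MetricSpace X] [CompactSpace X]
    (A : Set (Set X)) (hA : ∀ a ∈ A, IsConnected a)
    (s : Setoid X) (hs : ∀ x y, s.r x y ↔ finestRel A x y) :
    (∀ x : X, IsConnected {y | finestRel A x y}) ∧
    Continuous (Quotient.mk s) ∧ Function.Surjective (Quotient.mk s) ∧
    (∀ q : Quotient s, IsConnected ((Quotient.mk s) ⁻¹' {q})) := by
  refine ⟨finestRel_class_connected A hA, continuous_quotient_mk',
    Quotient.mk_surjective, ?_⟩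
  intro q
  obtain ⟨x, rfl⟩ := Quotient.exists_rep q
  have : (Quotient.mk s) ⁻¹' {Quotient.mk s x} = {y | finestRel A x y} := by
    ext y
    simp only [mem_preimage, mem_singleton_iff, mem_setOf_eq]
    rw [Quotient.eq]
    constructor
    · intro h
      exact (finestRel_equivalence A).symm ((hs y x).mp h)
    · intro h
      exact (hs y x).mpr ((finestRel_equivalence A).symm h)
  rw [this]
  exact finestRel_class_connected A hA x
end

section
/- Let X be a compact metric space, A a family of subsets of X, ∼_A the finest closed equivalence relation respecting A, and ψ : X → X/∼_A the quotient map. If f : X → X is continuous and sends each element of A into a single ∼_A-class, then there is a continuous map g : X/∼_A → X/∼_A with ψ ∘ f = g ∘ ψ. -/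
open Set Filter Metric Topology Function

lemma finestRel_equiv {Y : Type*} [TopologicalSpace Y] (A : Set (Set Y)) :
    Equivalence (finestRel A) := by
  constructor
  · intro x r hr _; exact hr.refl x
  · intro x y h r hr hra; exact hr.symm (h r hr hra)
  · intro x y z h1 h2 r hr hra; exact hr.trans (h1 r hr hra) (h2 r hr hra)

lemma finestRel_closed_s3 {Y : Type*} [TopologicalSpace Y] (A : Set (Set Y)) :
    ClosedRel (finestRel A) := by
  have : {p : Y × Y | finestRel A p.1 p.2} =
      ⋂ (r : Y → Y → Prop) (_ : Equivalence r) (_ : Respects A r), {p : Y × Y | r p.1 p.2} := by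
    ext p; simp [finestRel]
  rw [ClosedRel, this]
  exact isClosed_iInter fun r => isClosed_iInter fun _ => isClosed_iInter fun hr => hr.1

/-- a continuous self-map sending each element of `A` into a single class of
the finest closed equivalence relation respecting `A` induces a continuous map of the
quotient. -/
theorem finestRel_induced_map {X : Type*} [MetricSpace X] [CompactSpace X]
    (A : Set (Set X)) (s : Setoid X) (hs : ∀ x y, s.r x y ↔ finestRel A x y)
    (f : X → X) (hf : Continuous f)
    (hfA : ∀ a ∈ A, ∀ x ∈ a, ∀ y ∈ a, finestRel A (f x) (f y)) :
    ∃ g : Quotient s → Quotient s, Continuous g ∧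
      (Quotient.mk s) ∘ f = g ∘ (Quotient.mk s) := by
  have key : ∀ x y, finestRel A x y → finestRel A (f x) (f y) := by
    intro x y hxy
    exact hxy (fun a b => finestRel A (f a) (f b))
      ⟨fun a => (finestRel_equiv A).refl _,
       fun h => (finestRel_equiv A).symm h,
       fun h1 h2 => (finestRel_equiv A).trans h1 h2⟩
      ⟨(finestRel_closed_s3 A).preimage (hf.prodMap hf), hfA⟩
  refine ⟨Quotient.lift (fun x => Quotient.mk s (f x)) ?_, ?_, ?_⟩
  · intro a b hab
    exact Quotient.sound ((hs _ _).2 (key a b ((hs a b).1 hab)))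
  · exact continuous_quot_lift _ (continuous_quotient_mk'.comp hf)
  · rfl
end

section
/- A compact metric space X is finitely Suslinian if and only if X contains no non-degenerate limit continuum. -/
open Set Filter Metric Topology Function
open scoped ENNReal

private lemma exists_close_of_hausdorff' {X : Type*} [MetricSpace X] {s t : Set X} {r : ℝ}
    (h : EMetric.hausdorffEdist s t < ENNReal.ofReal r) {x : X} (hx : x ∈ s) :
    ∃ y ∈ t, dist x y < r := by
  have h1 : EMetric.infEdist x t < ENNReal.ofReal r :=
    lt_of_le_of_lt (EMetric.infEdist_le_hausdorffEdist_of_mem hx) h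
  obtain ⟨y, hy, hxy⟩ := EMetric.infEdist_lt_iff.mp h1
  exact ⟨y, hy, edist_lt_ofReal.mp hxy⟩

private lemma diam_le_of_hausdorff' {X : Type*} [MetricSpace X] {s t : Set X} {r : ℝ}
    (ht : Bornology.IsBounded t) (hr : 0 ≤ r)
    (h : EMetric.hausdorffEdist s t < ENNReal.ofReal r) :
    Metric.diam s ≤ Metric.diam t + 2 * r := by
  have h0 : (0:ℝ) ≤ Metric.diam t + 2 * r := by
    have := Metric.diam_nonneg (s := t); linarith
  refine Metric.diam_le_of_forall_dist_le h0 (fun x hx y hy => ?_)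
  obtain ⟨x', hx', hxx'⟩ := exists_close_of_hausdorff' h hx
  obtain ⟨y', hy', hyy'⟩ := exists_close_of_hausdorff' h hy
  have h1 : dist x y ≤ dist x x' + dist x' y' + dist y' y := dist_triangle4 x x' y' y
  have h2 : dist x' y' ≤ Metric.diam t := Metric.dist_le_diam_of_mem ht hx' hy'
  have h3 : dist y' y = dist y y' := dist_comm _ _
  linarith

private lemma isConnected_limit' {X : Type*} [MetricSpace X] {K : Set X} (hKc : IsCompact K)
    (hKne : K.Nonempty) {F : ℕ → Set X} (hF : ∀ n, IsConnected (F n))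
    (hconv : Tendsto (fun n => EMetric.hausdorffEdist (F n) K) atTop (nhds 0)) :
    IsConnected K := by
  refine ⟨hKne, ?_⟩
  by_contra hnc
  rw [IsPreconnected] at hnc
  push_neg at hnc
  obtain ⟨u, v, hu, hv, hcov, hune, hvne, hempty⟩ := hnc
  set A := K ∩ vᶜ with hAdef
  set B := K ∩ uᶜ with hBdef
  have hA : IsCompact A := hKc.inter_right hv.isClosed_compl
  have hB : IsCompact B := hKc.inter_right hu.isClosed_compl
  have hAne : A.Nonempty := by
    obtain ⟨x, hxK, hxu⟩ := hune
    refine ⟨x, hxK, fun hxv => ?_⟩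
    have : x ∈ K ∩ (u ∩ v) := ⟨hxK, hxu, hxv⟩
    rw [hempty] at this; exact this
  have hBne : B.Nonempty := by
    obtain ⟨x, hxK, hxv⟩ := hvne
    refine ⟨x, hxK, fun hxu => ?_⟩
    have : x ∈ K ∩ (u ∩ v) := ⟨hxK, hxu, hxv⟩
    rw [hempty] at this; exact this
  have hdisj : Disjoint A B := by
    rw [Set.disjoint_left]
    rintro x ⟨hxK, hxv⟩ ⟨-, hxu⟩
    rcases hcov hxK with h | h
    · exact hxu h
    · exact hxv h
  have hAB : A ∪ B = K := by
    apply Set.Subset.antisymm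
    · rintro x (⟨hx, -⟩ | ⟨hx, -⟩) <;> exact hx
    · intro x hxK
      by_cases hxv : x ∈ v
      · refine Or.inr ⟨hxK, fun hxu => ?_⟩
        have : x ∈ K ∩ (u ∩ v) := ⟨hxK, hxu, hxv⟩
        rw [hempty] at this; exact this
      · exact Or.inl ⟨hxK, hxv⟩
  obtain ⟨δ, hδ, hthick⟩ := hdisj.exists_thickenings hA hB.isClosed
  have hpos : (0:ℝ≥0∞) < ENNReal.ofReal δ := ENNReal.ofReal_pos.2 hδ
  obtain ⟨n, hn⟩ := (hconv.eventually_lt_const hpos).exists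
  have hn' : EMetric.hausdorffEdist K (F n) < ENNReal.ofReal δ := by
    rwa [EMetric.hausdorffEdist, Metric.hausdorffEDist_comm]
  have hcov' : F n ⊆ Metric.thickening δ A ∪ Metric.thickening δ B := by
    intro x hx
    obtain ⟨y, hyK, hxy⟩ := exists_close_of_hausdorff' hn hx
    have hyAB : y ∈ A ∪ B := hAB ▸ hyK
    rcases hyAB with hy | hy
    · exact Or.inl (Metric.mem_thickening_iff.mpr ⟨y, hy, hxy⟩)
    · exact Or.inr (Metric.mem_thickening_iff.mpr ⟨y, hy, hxy⟩)
  have hne1 : (F n ∩ Metric.thickening δ A).Nonempty := by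
    obtain ⟨a, haA⟩ := hAne
    obtain ⟨x, hxF, hax⟩ := exists_close_of_hausdorff' hn' haA.1
    exact ⟨x, hxF, Metric.mem_thickening_iff.mpr ⟨a, haA, by rwa [dist_comm]⟩⟩
  have hne2 : (F n ∩ Metric.thickening δ B).Nonempty := by
    obtain ⟨b, hbB⟩ := hBne
    obtain ⟨x, hxF, hbx⟩ := exists_close_of_hausdorff' hn' hbB.1
    exact ⟨x, hxF, Metric.mem_thickening_iff.mpr ⟨b, hbB, by rwa [dist_comm]⟩⟩
  obtain ⟨x, -, hx1, hx2⟩ := (hF n).isPreconnected _ _ Metric.isOpen_thickening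
    Metric.isOpen_thickening hcov' hne1 hne2
  exact Set.disjoint_left.mp hthick hx1 hx2

/-- a compactum is finitely Suslinian iff it contains no non-degenerate
limit continuum. -/
theorem finSus_iff_no_nondegenerate_limit_continuum
    {X : Type*} [MetricSpace X] [CompactSpace X] :
    FinSus X ↔ ∀ C : Set X, IsLimCont C → C.Subsingleton := by
  constructor
  · intro hfs C hC
    by_contra hns
    obtain ⟨hCc, hCconn, F, hFprop, hFdisj, hconv⟩ := hC
    rw [Set.not_subsingleton_iff] at hns
    obtain ⟨x, hxC, y, hyC, hxy⟩ := hns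
    set ε : ℝ := dist x y with hεdef
    have hε : 0 < ε := dist_pos.2 hxy
    have hq : (0:ℝ≥0∞) < ENNReal.ofReal (ε/4) := ENNReal.ofReal_pos.2 (by linarith)
    obtain ⟨N, hN⟩ := Filter.eventually_atTop.mp (hconv.eventually_lt_const hq)
    set S : Set (Set X) := F '' Set.Ici N with hSdef
    have hdiam : ∀ n, N ≤ n → ε/2 ≤ Metric.diam (F n) := by
      intro n hn
      have hn' : EMetric.hausdorffEdist C (F n) < ENNReal.ofReal (ε/4) := by
        rw [EMetric.hausdorffEdist, Metric.hausdorffEDist_comm]; exact hN n hn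
      obtain ⟨x', hx', hxx'⟩ := exists_close_of_hausdorff' hn' hxC
      obtain ⟨y', hy', hyy'⟩ := exists_close_of_hausdorff' hn' hyC
      have h1 : dist x y ≤ dist x x' + dist x' y' + dist y' y := dist_triangle4 x x' y' y
      have h2 : dist x' y' ≤ Metric.diam (F n) :=
        Metric.dist_le_diam_of_mem (hFprop n).1.isBounded hx' hy'
      have h3 : dist y' y = dist y y' := dist_comm _ _
      linarith
    have hfin : S.Finite := by
      refine hfs (ε/2) (by linarith) S ?_ ?_
      · rintro C' ⟨n, hn, rfl⟩
        exact ⟨(hFprop n).1, (hFprop n).2, hdiam n hn⟩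
      · rintro a ⟨m, -, rfl⟩ b ⟨n, -, rfl⟩ hab
        exact hFdisj (fun h => hab (by rw [h]))
    have hinj : Set.InjOn F (Set.Ici N) := by
      intro m _ n _ hmn
      by_contra hne
      have hd : Disjoint (F m) (F n) := hFdisj hne
      rw [hmn, disjoint_self] at hd
      exact ((hFprop n).2.nonempty).ne_empty hd
    exact ((Set.Ici_infinite N).image hinj) hfin
  · intro h ε hε S hS hpair
    by_contra hinf
    have hSinf : S.Infinite := hinf
    set e := hSinf.natEmbedding with hedef
    set C : ℕ → Set X := fun n => (e n : Set X) with hCdef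
    have hCmem : ∀ n, C n ∈ S := fun n => (e n).2
    have hCne : ∀ m n, m ≠ n → C m ≠ C n := by
      intro m n hmn hC
      exact hmn (e.injective (Subtype.ext hC))
    have hCprop : ∀ n, IsCompact (C n) ∧ IsConnected (C n) ∧ ε ≤ Metric.diam (C n) :=
      fun n => hS _ (hCmem n)
    set g : ℕ → TopologicalSpace.NonemptyCompacts X :=
      fun n => ⟨⟨C n, (hCprop n).1⟩, (hCprop n).2.1.nonempty⟩ with hgdef
    obtain ⟨K, φ, hφ, hconv⟩ := CompactSpace.tendsto_subseq g
    have hedist : Tendsto (fun n => edist (g (φ n)) K) atTop (nhds 0) := by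
      have := hconv.edist (tendsto_const_nhds (f := atTop) (x := K))
      simpa using this
    have hhaus : Tendsto (fun n => EMetric.hausdorffEdist (C (φ n)) (K : Set X))
        atTop (nhds 0) := hedist
    have hKlim : IsLimCont (K : Set X) := by
      refine ⟨K.isCompact, ?_, fun n => C (φ n), fun n => ⟨(hCprop _).1, (hCprop _).2.1⟩,
        ?_, hhaus⟩
      · exact isConnected_limit' K.isCompact K.nonempty (fun n => (hCprop (φ n)).2.1) hhaus
      · intro m n hmn
        exact hpair (hCmem _) (hCmem _) (hCne _ _ (fun h => hmn (hφ.injective h)))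
    have hsub := h _ hKlim
    have hq : (0:ℝ≥0∞) < ENNReal.ofReal (ε/4) := ENNReal.ofReal_pos.2 (by linarith)
    obtain ⟨n, hn⟩ := (hhaus.eventually_lt_const hq).exists
    have hd : Metric.diam (C (φ n)) ≤ Metric.diam (K : Set X) + 2 * (ε/4) :=
      diam_le_of_hausdorff' K.isCompact.isBounded (by linarith) hn
    have h0 : Metric.diam (K : Set X) = 0 := Metric.diam_subsingleton hsub
    have := (hCprop (φ n)).2.2
    linarith
end

section
/- (Boundary Bumping) Let X be a compact connected metric space (continuum), let V ⊊ X be a proper open subset, and let Y be a connected component of V. Then the closure of Y intersects the boundary of V. -/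
open Set Filter Metric Topology Function

/-- Šura-Bura: in a compact T2 space, if the connected component of `z` is contained in an
open set `U`, there is a clopen set between them. -/
lemma exists_isClopen_between {Z : Type*} [TopologicalSpace Z] [T2Space Z] [CompactSpace Z]
    {z : Z} {U : Set Z} (hU : IsOpen U) (h : connectedComponent z ⊆ U) :
    ∃ B : Set Z, IsClopen B ∧ z ∈ B ∧ B ⊆ U := by
  have hcover : Uᶜ ∩ ⋂ s : { s : Set Z // IsClopen s ∧ z ∈ s }, (s : Set Z) = ∅ := by
    rw [← connectedComponent_eq_iInter_isClopen]
    rw [Set.eq_empty_iff_forall_notMem]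
    rintro y ⟨hy1, hy2⟩
    exact hy1 (h hy2)
  obtain ⟨t, ht⟩ := (hU.isClosed_compl.isCompact).elim_finite_subfamily_closed
    (fun s : { s : Set Z // IsClopen s ∧ z ∈ s } => (s : Set Z)) (fun s => s.2.1.1) hcover
  refine ⟨⋂ s ∈ t, (s : Set Z), isClopen_biInter_finset (fun s _ => s.2.1), ?_, ?_⟩
  · exact Set.mem_iInter₂.mpr fun s _ => s.2.2
  · intro y hy
    by_contra hyU
    exact Set.eq_empty_iff_forall_notMem.mp ht y ⟨hyU, hy⟩

/-- Boundary Bumping: in a continuum `X`, the closure of any connected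
component of a proper open subset `V` meets the boundary of `V`. -/
theorem boundary_bumping
    {X : Type*} [MetricSpace X] [CompactSpace X] [ConnectedSpace X]
    (V : Set X) (hV : IsOpen V) (hVne : V ≠ Set.univ) (x : X) (hx : x ∈ V) :
    (closure (connectedComponentIn V x) ∩ frontier V).Nonempty := by
  classical
  by_contra hcon
  rw [Set.not_nonempty_iff_eq_empty] at hcon
  set K := connectedComponentIn V x with hKdef
  have hxK : x ∈ K := mem_connectedComponentIn hx
  have hKsub : K ⊆ V := connectedComponentIn_subset V x
  -- the frontier of V is nonempty
  have hfr : (frontier V).Nonempty := by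
    rw [Set.nonempty_iff_ne_empty]
    intro h
    rcases isClopen_iff.mp (isClopen_iff_frontier_eq_empty.mpr h) with h' | h'
    · exact absurd h' (Set.nonempty_of_mem hx).ne_empty
    · exact hVne h'
  -- closure K ⊆ V
  have hclKV : closure K ⊆ V := by
    intro y hy
    by_contra hyV
    have hyfr : y ∈ frontier V := by
      refine ⟨closure_mono hKsub hy, ?_⟩
      rwa [hV.interior_eq]
    exact Set.eq_empty_iff_forall_notMem.mp hcon y ⟨hy, hyfr⟩
  -- K is closed
  have hclK : closure K ⊆ K :=
    (isPreconnected_connectedComponentIn.closure).subset_connectedComponentIn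
      (subset_closure hxK) hclKV
  have hKclosed : IsClosed K := isClosed_of_closure_subset hclK
  -- separate K from frontier V
  have hdisj : Disjoint K (frontier V) := by
    rw [Set.disjoint_iff_inter_eq_empty, Set.eq_empty_iff_forall_notMem]
    rintro y ⟨h1, h2⟩
    exact Set.eq_empty_iff_forall_notMem.mp hcon y ⟨subset_closure h1, h2⟩
  obtain ⟨U1, U2, hU1, hU2, hKU1, hfrU2, hU12⟩ :=
    normal_separation hKclosed isClosed_frontier hdisj
  set W := U1 ∩ V with hWdef
  have hWopen : IsOpen W := hU1.inter hV
  have hKW : K ⊆ W := fun y hy => ⟨hKU1 hy, hKsub hy⟩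
  have hxW : x ∈ W := hKW hxK
  -- closure W misses frontier V
  have hclWfr : ∀ y ∈ closure W, y ∉ frontier V := by
    intro y hy hyfr
    have h2 : y ∈ U2 := hfrU2 hyfr
    have : y ∈ closure (U2 ∩ W) := hU2.inter_closure ⟨h2, hy⟩
    have hUW : U2 ∩ W = ∅ := by
      rw [Set.eq_empty_iff_forall_notMem]
      rintro z ⟨hz2, hz1, _⟩
      exact Set.disjoint_iff.mp hU12 ⟨hz1, hz2⟩
    rw [hUW, closure_empty] at this
    exact this
  -- closure W ⊆ V
  have hclWV : closure W ⊆ V := by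
    intro y hy
    by_contra hyV
    exact hclWfr y hy ⟨closure_mono (Set.inter_subset_right) hy, by rwa [hV.interior_eq]⟩
  set A := closure W with hAdef
  have hAcomp : IsCompact A := isClosed_closure.isCompact
  have hAx : x ∈ A := subset_closure hxW
  haveI : CompactSpace A := isCompact_iff_compactSpace.mp hAcomp
  set x' : A := ⟨x, hAx⟩ with hx'def
  -- the connected component of x' in A lies in W
  have hcc : connectedComponent x' ⊆ (Subtype.val ⁻¹' W : Set A) := by
    intro y hy
    have h1 : (y : X) ∈ connectedComponentIn A x := by
      rw [connectedComponentIn_eq_image hAx]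
      exact ⟨y, hy, rfl⟩
    have h2 : connectedComponentIn A x ⊆ K :=
      isPreconnected_connectedComponentIn.subset_connectedComponentIn
        (mem_connectedComponentIn hAx)
        (fun z hz => hclWV (connectedComponentIn_subset A x hz))
    exact hKW (h2 h1)
  obtain ⟨B, hB, hxB, hBW⟩ := exists_isClopen_between
    (continuous_subtype_val.isOpen_preimage W hWopen) hcc
  -- the image of B in X is clopen
  have hBWim : Subtype.val '' B ⊆ W := by
    rintro _ ⟨b, hb, rfl⟩
    exact hBW hb
  have hBclosed : IsClosed (Subtype.val '' B) :=
    ((hB.1.isCompact).image continuous_subtype_val).isClosed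
  have hBopen : IsOpen (Subtype.val '' B) := by
    obtain ⟨O, hO, hOB⟩ := isOpen_induced_iff.mp hB.2
    have him : Subtype.val '' B = O ∩ W := by
      apply Set.Subset.antisymm
      · rintro _ ⟨b, hb, rfl⟩
        refine ⟨?_, hBW hb⟩
        rw [← hOB] at hb
        exact hb
      · rintro y ⟨hyO, hyW⟩
        have hyA : y ∈ A := subset_closure hyW
        refine ⟨⟨y, hyA⟩, ?_, rfl⟩
        rw [← hOB]
        exact hyO
    rw [him]
    exact hO.inter hWopen
  rcases isClopen_iff.mp ⟨hBclosed, hBopen⟩ with h' | h'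
  · exact Set.eq_empty_iff_forall_notMem.mp h' x ⟨x', hxB, rfl⟩
  · apply hVne
    apply Set.eq_univ_of_univ_subset
    intro y _
    have : y ∈ Subtype.val '' B := h' ▸ Set.mem_univ y
    exact (hBWim this).2
end

section
/- Let X be an unshielded planar compactum and FS∼ the finest closed equivalence relation respecting the limit continua of X. For each component Y of X define x ∼_▲ y iff x and y lie in the same component Y of X and x FS∼_Y y (with FS∼_Y taken for limit continua of Y). Then ∼_▲ is finer than FS∼_X, i.e. every ∼_▲-class is contained in an FS∼_X-class. -/
open Set Filter Metric Topology Function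

/-- A relation is closed on the subset `Z` if its graph restricted to `Z × Z` is closed. -/
def RelClosedOn {E : Type*} [MetricSpace E] (Z : Set E) (r : E → E → Prop) : Prop :=
  IsClosed {p : E × E | p.1 ∈ Z ∧ p.2 ∈ Z ∧ r p.1 p.2}

/-- A relation is an equivalence relation on the subset `Z`. -/
def EquivOn {E : Type*} (Z : Set E) (r : E → E → Prop) : Prop :=
  (∀ x ∈ Z, r x x) ∧ (∀ x ∈ Z, ∀ y ∈ Z, r x y → r y x) ∧
  (∀ x ∈ Z, ∀ y ∈ Z, ∀ w ∈ Z, r x y → r y w → r x w)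

/-- A relation on `Z` respects the limit continua of `Z` if it is closed and each limit
continuum of `Z` is contained in a single class. -/
def RespectsLimOn {E : Type*} [MetricSpace E] (Z : Set E) (r : E → E → Prop) : Prop :=
  RelClosedOn Z r ∧ ∀ C, LimContIn Z C → ∀ x ∈ C, ∀ y ∈ C, r x y

/-- The finest closed equivalence relation on the subset `Z` respecting the family of
limit continua of `Z` (`FS∼_Z`). -/
def fsRelOn {E : Type*} [MetricSpace E] (Z : Set E) : E → E → Prop :=
  fun x y => x ∈ Z ∧ y ∈ Z ∧
    ∀ r : E → E → Prop, EquivOn Z r → RespectsLimOn Z r → r x y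

/-- the componentwise relation `∼_▲` (defined by applying `FS∼` inside each
connected component of `X`) is finer than `FS∼_X`. -/
theorem componentwise_rel_finer
    (X : Set ℂ) (hXc : IsCompact X) (hXu : Unshielded X) :
    ∀ x y : ℂ, x ∈ X → y ∈ connectedComponentIn X x →
      fsRelOn (connectedComponentIn X x) x y → fsRelOn X x y := by
  intro x y hx hy h
  set Y := connectedComponentIn X x with hYdef
  obtain ⟨hxY, hyY, hmin⟩ := h
  have hYX : Y ⊆ X := connectedComponentIn_subset X x
  have hYclosed : IsClosed Y := by
    rw [hYdef, connectedComponentIn_eq_image hx]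
    have hcc : IsClosed (connectedComponent (⟨x, hx⟩ : X)) := isClosed_connectedComponent
    have : IsCompact (connectedComponent (⟨x, hx⟩ : X)) := by
      have : CompactSpace X := isCompact_iff_compactSpace.mp hXc
      exact hcc.isCompact
    exact (this.image continuous_subtype_val).isClosed
  refine ⟨hYX hxY, hYX hyY, ?_⟩
  intro r hEq hResp
  apply hmin r
  · exact ⟨fun a ha => hEq.1 a (hYX ha),
      fun a ha b hb hab => hEq.2.1 a (hYX ha) b (hYX hb) hab,
      fun a ha b hb c hc hab hbc => hEq.2.2 a (hYX ha) b (hYX hb) c (hYX hc) hab hbc⟩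
  constructor
  · have heq : {p : ℂ × ℂ | p.1 ∈ Y ∧ p.2 ∈ Y ∧ r p.1 p.2}
        = (Y ×ˢ Y) ∩ {p : ℂ × ℂ | p.1 ∈ X ∧ p.2 ∈ X ∧ r p.1 p.2} := by
      ext ⟨a, b⟩
      constructor
      · rintro ⟨ha, hb, hr⟩
        exact ⟨⟨ha, hb⟩, hYX ha, hYX hb, hr⟩
      · rintro ⟨⟨ha, hb⟩, -, -, hr⟩
        exact ⟨ha, hb, hr⟩
    unfold RelClosedOn
    rw [heq]
    exact (hYclosed.prod hYclosed).inter hResp.1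
  · intro C hC a ha b hb
    obtain ⟨⟨hCY, hCcomp, hCconn⟩, F, hF, hFdis, hFt⟩ := hC
    exact hResp.2 C ⟨⟨hCY.trans hYX, hCcomp, hCconn⟩, F,
      fun n => ⟨(hF n).1.trans hYX, (hF n).2⟩, hFdis, hFt⟩ a ha b hb
end

section
/- Let X = A × [-1,1] ⊂ ℝ², where A ⊂ (0,1] is a Cantor set. Let FS∼ be the finest closed equivalence relation on X respecting the family of limit continua. Then each FS∼-class equals a fiber {a} × [-1,1] (a ∈ A), so X/FS∼ is homeomorphic to the Cantor set A, whereas each component {a} × [-1,1] of X contains no non-degenerate limit continuum of itself. -/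
open Set Filter Metric Topology Function

open MeasureTheory in
/-- A nondegenerate limit continuum cannot exist inside a vertical segment. -/
lemma segment_no_limcont {a : ℝ} {C : Set (ℝ × ℝ)}
    (h : LimContIn (({a} : Set ℝ) ×ˢ Set.Icc (-1:ℝ) 1) C) : C.Subsingleton := by
  by_contra hns
  rw [Set.not_subsingleton_iff] at hns
  obtain ⟨x, hx, y, hy, hxy⟩ := hns
  obtain ⟨⟨hCsub, hCcomp, hCconn⟩, F, hF, hFdisj, hFtend⟩ := h
  set δ := dist x y with hδ
  have hδpos : 0 < δ := dist_pos.mpr hxy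
  have hofr : (0:ENNReal) < ENNReal.ofReal (δ/4) := ENNReal.ofReal_pos.mpr (by linarith)
  have hev : ∀ᶠ n in atTop, EMetric.hausdorffEdist (F n) C < ENNReal.ofReal (δ/4) :=
    hFtend.eventually (gt_mem_nhds hofr)
  obtain ⟨N, hN⟩ := Filter.eventually_atTop.mp hev
  -- for every n ≥ N, the n-th continuum contains two points at distance ≥ δ/2
  have key : ∀ n, N ≤ n → ∃ u ∈ F n, ∃ v ∈ F n, δ/2 ≤ dist u.2 v.2 := by
    intro n hn
    have hd : EMetric.hausdorffEdist C (F n) < ENNReal.ofReal (δ/4) := by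
      exact EMetric.hausdorffEdist_comm.trans_lt (hN n hn)
    obtain ⟨u, hu, hxu⟩ := EMetric.exists_edist_lt_of_hausdorffEdist_lt hx hd
    obtain ⟨v, hv, hyv⟩ := EMetric.exists_edist_lt_of_hausdorffEdist_lt hy hd
    rw [edist_lt_ofReal] at hxu hyv
    have huv : δ/2 ≤ dist u v := by
      have h1 : dist x y ≤ dist x u + dist u v + dist v y := dist_triangle4 x u v y
      have h2 : dist v y = dist y v := dist_comm v y
      linarith [h1, h2 ▸ hyv]
    refine ⟨u, hu, v, hv, ?_⟩
    have hu1 : u.1 = a := ((hF n).1 hu).1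
    have hv1 : v.1 = a := ((hF n).1 hv).1
    have : dist u v = dist u.2 v.2 := by
      rw [Prod.dist_eq, hu1, hv1, dist_self]
      exact max_eq_right dist_nonneg
    linarith [this ▸ huv]
  -- second-coordinate projections
  set G : ℕ → Set ℝ := fun k => Prod.snd '' F (N + k) with hG
  have hGmeas : ∀ k, MeasurableSet (G k) :=
    fun k => ((hF (N + k)).2.1.image continuous_snd).measurableSet
  have hGdisj : Pairwise (Disjoint on G) := by
    intro k l hkl
    rw [Function.onFun, Set.disjoint_left]
    rintro t ⟨p, hp, rfl⟩ ⟨q, hq, hqt⟩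
    have hp1 : p.1 = a := ((hF (N + k)).1 hp).1
    have hq1 : q.1 = a := ((hF (N + l)).1 hq).1
    have hpq : p = q := by
      apply Prod.ext
      · rw [hp1, hq1]
      · exact hqt.symm
    have hne : N + k ≠ N + l := fun hEq => hkl (Nat.add_left_cancel hEq)
    exact Set.disjoint_left.mp (hFdisj hne) hp (hpq ▸ hq)
  have hGvol : ∀ k, ENNReal.ofReal (δ/2) ≤ volume (G k) := by
    intro k
    obtain ⟨u, hu, v, hv, huv⟩ := key (N + k) (Nat.le_add_right N k)
    have hoc : (G k).OrdConnected :=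
      ((hF (N + k)).2.2.image Prod.snd continuous_snd.continuousOn).isPreconnected.ordConnected
    have hsub : Set.uIcc u.2 v.2 ⊆ G k :=
      hoc.uIcc_subset ⟨u, hu, rfl⟩ ⟨v, hv, rfl⟩
    calc ENNReal.ofReal (δ/2) ≤ ENNReal.ofReal (|v.2 - u.2|) := by
          apply ENNReal.ofReal_le_ofReal
          rw [← Real.dist_eq, dist_comm]; exact huv
      _ = volume (Set.uIcc u.2 v.2) := by
          rw [abs_sub_comm, Set.uIcc, Set.Icc, ← Set.Icc]
          rw [Real.volume_Icc, max_sub_min_eq_abs']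
      _ ≤ volume (G k) := measure_mono hsub
  have hGsub : (⋃ k, G k) ⊆ Set.Icc (-1:ℝ) 1 := by
    rintro t ht
    obtain ⟨k, p, hp, rfl⟩ := by simpa using ht
    exact ((hF (N + k)).1 hp).2
  have htop : (⊤:ENNReal) ≤ volume (⋃ k, G k) := by
    rw [MeasureTheory.measure_iUnion hGdisj hGmeas]
    calc (⊤:ENNReal) = ∑' _ : ℕ, ENNReal.ofReal (δ/2) :=
          (ENNReal.tsum_const_eq_top_of_ne_zero
            (by simp only [ne_eq, ENNReal.ofReal_eq_zero, not_le]; linarith)).symm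
      _ ≤ ∑' k, volume (G k) := ENNReal.tsum_le_tsum hGvol
  have hle : volume (⋃ k, G k) ≤ volume (Set.Icc (-1:ℝ) 1) := measure_mono hGsub
  rw [Real.volume_Icc] at hle
  exact ENNReal.ofReal_lt_top.not_ge (le_trans htop hle)

/-- Subcontinua of `A ×ˢ [-1,1]` have constant first coordinate if `A` is
totally disconnected. -/
lemma subcont_fst_const {A : Set ℝ} (hAtd : IsTotallyDisconnected A)
    {C : Set (ℝ × ℝ)} (hC : SubcontIn (A ×ˢ Set.Icc (-1:ℝ) 1) C)
    {x y : ℝ × ℝ} (hx : x ∈ C) (hy : y ∈ C) : x.1 = y.1 := by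
  have hsub : Prod.fst '' C ⊆ A := by
    rintro _ ⟨z, hz, rfl⟩; exact (hC.1 hz).1
  have hconn : IsPreconnected (Prod.fst '' C) :=
    (hC.2.2.image Prod.fst continuous_fst.continuousOn).isPreconnected
  exact hAtd _ hsub hconn ⟨x, hx, rfl⟩ ⟨y, hy, rfl⟩

/-- From a perfect set, extract an injective sequence converging to a given point. -/
lemma exists_seq_perfect {A : Set ℝ} (hAp : Perfect A) {a : ℝ} (ha : a ∈ A) :
    ∃ g : ℕ → ℝ, (∀ n, g n ∈ A) ∧ (∀ n m, n ≠ m → g n ≠ g m) ∧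
      Tendsto (fun n => dist (g n) a) atTop (nhds 0) := by
  have key : ∀ ε : ℝ, 0 < ε → ∃ b, b ∈ A ∧ b ≠ a ∧ dist b a < ε := by
    intro ε hε
    obtain ⟨y, ⟨hyb, hyA⟩, hyne⟩ := accPt_iff_nhds.mp (hAp.acc a ha)
      (Metric.ball a ε) (Metric.ball_mem_nhds a hε)
    exact ⟨y, hyA, hyne, by simpa [Metric.mem_ball] using hyb⟩
  have step : ∀ p : {b : ℝ // b ∈ A ∧ b ≠ a}, ∀ n : ℕ,
      ∃ q : {b : ℝ // b ∈ A ∧ b ≠ a},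
        dist q.1 a < min (dist p.1 a) (1/(n+1)) := by
    intro p n
    have h1 : 0 < dist p.1 a := dist_pos.mpr p.2.2
    have h2 : (0:ℝ) < 1/(n+1) := by positivity
    obtain ⟨b, hbA, hbne, hbd⟩ := key _ (lt_min h1 h2)
    exact ⟨⟨b, hbA, hbne⟩, hbd⟩
  choose step' hstep using step
  obtain ⟨b0, hb0A, hb0ne, -⟩ := key 1 one_pos
  let g' : ℕ → {b : ℝ // b ∈ A ∧ b ≠ a} := fun n =>
    Nat.rec ⟨b0, hb0A, hb0ne⟩ (fun n p => step' p n) n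
  set d : ℕ → ℝ := fun n => dist (g' n).1 a with hd
  have hlt : ∀ n, d (n+1) < d n := fun n =>
    lt_of_lt_of_le (hstep (g' n) n) (min_le_left _ _)
  have hanti : StrictAnti d := strictAnti_nat_of_succ_lt hlt
  have hbound : ∀ n : ℕ, d (n+1) < 1/(n+1) := fun n =>
    lt_of_lt_of_le (hstep (g' n) n) (min_le_right _ _)
  refine ⟨fun n => (g' n).1, fun n => (g' n).2.1, ?_, ?_⟩
  · intro n m hnm hne
    have hne' : (g' n).1 = (g' m).1 := hne
    refine hnm (hanti.injective ?_)
    show dist (g' n).1 a = dist (g' m).1 a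
    rw [hne']
  · have : Tendsto (fun n : ℕ => d (n + 1)) atTop (nhds 0) :=
      tendsto_of_tendsto_of_tendsto_of_le_of_le tendsto_const_nhds
        tendsto_one_div_add_atTop_nhds_zero_nat (fun n => dist_nonneg)
        (fun n => (hbound n).le)
    exact (tendsto_add_atTop_iff_nat 1).mp this

lemma fiber_hausdorff (b c : ℝ) :
    EMetric.hausdorffEdist (({b}:Set ℝ) ×ˢ Set.Icc (-1:ℝ) 1)
      (({c}:Set ℝ) ×ˢ Set.Icc (-1:ℝ) 1) ≤ edist b c := by
  apply EMetric.hausdorffEdist_le_of_mem_edist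
  · rintro ⟨x1, x2⟩ hx
    refine ⟨(c, x2), Set.mem_prod.mpr ⟨rfl, (Set.mem_prod.mp hx).2⟩, ?_⟩
    have h1 : x1 = b := (Set.mem_prod.mp hx).1
    simp [Prod.edist_eq, h1]
  · rintro ⟨x1, x2⟩ hx
    refine ⟨(b, x2), Set.mem_prod.mpr ⟨rfl, (Set.mem_prod.mp hx).2⟩, ?_⟩
    have h1 : x1 = c := (Set.mem_prod.mp hx).1
    simp [Prod.edist_eq, h1, edist_comm]

lemma fiber_subcont {A : Set ℝ} {a : ℝ} (ha : a ∈ A) :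
    SubcontIn (A ×ˢ Set.Icc (-1:ℝ) 1) (({a} : Set ℝ) ×ˢ Set.Icc (-1:ℝ) 1) :=
  ⟨Set.prod_mono (Set.singleton_subset_iff.mpr ha) (subset_refl _),
    isCompact_singleton.prod isCompact_Icc,
    isConnected_singleton.prod ⟨Set.nonempty_Icc.mpr (by norm_num), isPreconnected_Icc⟩⟩

/-- Each fiber is a limit continuum of `A ×ˢ [-1,1]` when `A` is perfect. -/
lemma fiber_limCont {A : Set ℝ} (hAp : Perfect A) {a : ℝ} (ha : a ∈ A) :
    LimContIn (A ×ˢ Set.Icc (-1:ℝ) 1) (({a} : Set ℝ) ×ˢ Set.Icc (-1:ℝ) 1) := by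
  obtain ⟨g, hgA, hginj, hgd⟩ := exists_seq_perfect hAp ha
  refine ⟨fiber_subcont ha, fun n => ({g n} : Set ℝ) ×ˢ Set.Icc (-1:ℝ) 1,
    fun n => fiber_subcont (hgA n), ?_, ?_⟩
  · intro n m hnm
    rw [Function.onFun, Set.disjoint_left]
    rintro p hp hq
    exact hginj n m hnm ((Set.mem_prod.mp hp).1.symm.trans (Set.mem_prod.mp hq).1)
  · have h1 : Tendsto (fun n => ENNReal.ofReal (dist (g n) a)) atTop (nhds 0) := by
      simpa using ENNReal.tendsto_ofReal hgd
    refine tendsto_of_tendsto_of_tendsto_of_le_of_le tendsto_const_nhds h1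
      (fun n => zero_le) (fun n => ?_)
    calc EMetric.hausdorffEdist (({g n} : Set ℝ) ×ˢ Set.Icc (-1:ℝ) 1)
          (({a} : Set ℝ) ×ˢ Set.Icc (-1:ℝ) 1) ≤ edist (g n) a := fiber_hausdorff _ _
      _ = ENNReal.ofReal (dist (g n) a) := edist_dist _ _

/-- Characterisation of `FS∼` on `A ×ˢ [-1,1]`. -/
lemma fs_iff {A : Set ℝ} (hAc : IsCompact A) (hAp : Perfect A)
    (hAtd : IsTotallyDisconnected A) {p q : ℝ × ℝ} :
    fsRelOn (A ×ˢ Set.Icc (-1:ℝ) 1) p q ↔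
      p ∈ A ×ˢ Set.Icc (-1:ℝ) 1 ∧ q ∈ A ×ˢ Set.Icc (-1:ℝ) 1 ∧ p.1 = q.1 := by
  set X := A ×ˢ Set.Icc (-1:ℝ) 1 with hX
  constructor
  · rintro ⟨hp, hq, hall⟩
    refine ⟨hp, hq, ?_⟩
    have hXcl : IsClosed X := hAc.isClosed.prod isClosed_Icc
    refine hall (fun x y => x.1 = y.1)
      ⟨fun x _ => rfl, fun x _ y _ h => h.symm, fun x _ y _ w _ h1 h2 => h1.trans h2⟩
      ⟨?_, ?_⟩
    · have hset : {r : (ℝ×ℝ)×(ℝ×ℝ) | r.1 ∈ X ∧ r.2 ∈ X ∧ r.1.1 = r.2.1}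
          = ((Prod.fst ⁻¹' X) ∩ (Prod.snd ⁻¹' X)) ∩ {r : (ℝ×ℝ)×(ℝ×ℝ) | r.1.1 = r.2.1} := by
        ext r
        simp only [Set.mem_setOf_eq, Set.mem_inter_iff, Set.mem_preimage]
        tauto
      rw [RelClosedOn, hset]
      exact ((hXcl.preimage continuous_fst).inter (hXcl.preimage continuous_snd)).inter
        (isClosed_eq (continuous_fst.comp continuous_fst)
          (continuous_fst.comp continuous_snd))
    · intro C hC x hx y hy
      exact subcont_fst_const hAtd hC.1 hx hy
  · rintro ⟨hp, hq, hpq⟩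
    refine ⟨hp, hq, fun r hre hresp => ?_⟩
    have hfib := fiber_limCont hAp (Set.mem_prod.mp hp).1
    exact hresp.2 _ hfib p (Set.mem_prod.mpr ⟨rfl, (Set.mem_prod.mp hp).2⟩)
      q (Set.mem_prod.mpr ⟨hpq.symm, (Set.mem_prod.mp hq).2⟩)


/-- for `X = A × [-1,1]` with `A ⊂ (0,1]` a Cantor set, the classes of the
finest closed equivalence relation respecting the limit continua of `X` are exactly the
fibers `{a} × [-1,1]`, so the quotient is homeomorphic to `A`, even though each component
`{a} × [-1,1]` contains no non-degenerate limit continuum of itself. -/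
theorem cantor_times_interval_fs_classes
    (A : Set ℝ) (hA1 : A ⊆ Set.Ioc 0 1) (hAne : A.Nonempty)
    (hAc : IsCompact A) (hAp : Perfect A) (hAtd : IsTotallyDisconnected A) :
    (∀ p ∈ A ×ˢ Set.Icc (-1:ℝ) 1,
        {q : ℝ × ℝ | fsRelOn (A ×ˢ Set.Icc (-1:ℝ) 1) p q}
          = ({p.1} : Set ℝ) ×ˢ Set.Icc (-1:ℝ) 1) ∧
    (∃ s : Setoid (A ×ˢ Set.Icc (-1:ℝ) 1 : Set (ℝ × ℝ)),
        (∀ x y : (A ×ˢ Set.Icc (-1:ℝ) 1 : Set (ℝ × ℝ)),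
          s.r x y ↔ fsRelOn (A ×ˢ Set.Icc (-1:ℝ) 1) ↑x ↑y) ∧
        Nonempty (Quotient s ≃ₜ A)) ∧
    (∀ a ∈ A, ∀ C : Set (ℝ × ℝ),
        LimContIn (({a} : Set ℝ) ×ˢ Set.Icc (-1:ℝ) 1) C → C.Subsingleton) := by
  refine ⟨?_, ?_, ?_⟩
  · intro p hp
    ext q
    simp only [Set.mem_setOf_eq]
    rw [fs_iff hAc hAp hAtd]
    constructor
    · rintro ⟨-, hqX, hpq⟩
      exact Set.mem_prod.mpr ⟨hpq.symm, (Set.mem_prod.mp hqX).2⟩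
    · intro hq
      obtain ⟨hq1, hq2⟩ := Set.mem_prod.mp hq
      refine ⟨hp, Set.mem_prod.mpr ⟨?_, hq2⟩, (Set.mem_singleton_iff.mp hq1).symm⟩
      rw [Set.mem_singleton_iff.mp hq1]
      exact (Set.mem_prod.mp hp).1
  · haveI : CompactSpace (A ×ˢ Set.Icc (-1:ℝ) 1 : Set (ℝ × ℝ)) :=
      isCompact_iff_compactSpace.mp (hAc.prod isCompact_Icc)
    set s : Setoid (A ×ˢ Set.Icc (-1:ℝ) 1 : Set (ℝ × ℝ)) :=
      ⟨fun x y => (x : ℝ × ℝ).1 = (y : ℝ × ℝ).1,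
        ⟨fun _ => rfl, fun h => h.symm, fun h1 h2 => h1.trans h2⟩⟩ with hs
    refine ⟨s, fun x y => ?_, ?_⟩
    · rw [fs_iff hAc hAp hAtd]
      constructor
      · intro h
        exact ⟨x.2, y.2, h⟩
      · rintro ⟨-, -, h⟩
        exact h
    · let f : (A ×ˢ Set.Icc (-1:ℝ) 1 : Set (ℝ × ℝ)) → A :=
        fun x => ⟨(x : ℝ × ℝ).1, x.2.1⟩
      have hf : Continuous f :=
        Continuous.subtype_mk (continuous_fst.comp continuous_subtype_val) _
      have hresp : ∀ a b, a ≈ b → f a = f b := fun a b h => Subtype.ext h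
      let e : Quotient s ≃ A :=
        { toFun := Quotient.lift f hresp
          invFun := fun a => Quotient.mk s
            ⟨((a : ℝ), 0), Set.mem_prod.mpr ⟨a.2, by norm_num⟩⟩
          left_inv := Quotient.ind fun x => Quotient.sound rfl
          right_inv := fun a => Subtype.ext rfl }
      exact ⟨Continuous.homeoOfEquivCompactToT2 (f := e) (hf.quotient_lift hresp)⟩
  · intro a _ C hC
    exact segment_no_limcont hC
end

section
/- Let X be a compact metric space and let ∼ be an upper semi-continuous (closed) equivalence relation on X. Then the equivalence relation ∼' whose classes are the connected components of ∼-classes is also a closed equivalence relation on X. -/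
open Set Filter Metric Topology Function

private lemma class_eq_of_rel {X : Type*} {r : X → X → Prop} (hre : Equivalence r)
    {x y : X} (h : r x y) : {z | r x z} = {z | r y z} := by
  ext z
  exact ⟨fun hz => hre.trans (hre.symm h) hz, fun hz => hre.trans h hz⟩

private lemma usc_open {X : Type*} [MetricSpace X] [CompactSpace X]
    {r : X → X → Prop} (hrc : ClosedRel r) {O : Set X} (hO : IsOpen O) :
    IsOpen {x | ∀ z, r x z → z ∈ O} := by
  rw [← isClosed_compl_iff]
  have heq : {x | ∀ z, r x z → z ∈ O}ᶜ =
      Prod.fst '' ({p : X × X | r p.1 p.2} ∩ (Set.univ ×ˢ Oᶜ)) := by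
    ext x
    simp only [Set.mem_compl_iff, Set.mem_setOf_eq, Set.mem_image, Set.mem_inter_iff,
      Set.mem_prod, Set.mem_univ, true_and, not_forall]
    constructor
    · rintro ⟨z, hz, hzO⟩; exact ⟨(x, z), ⟨hz, hzO⟩, rfl⟩
    · rintro ⟨⟨a, b⟩, ⟨hab, hbO⟩, rfl⟩; exact ⟨b, hab, hbO⟩
  rw [heq]
  have hcl : IsClosed ({p : X × X | r p.1 p.2} ∩ (Set.univ ×ˢ Oᶜ)) :=
    hrc.inter (isClosed_univ.prod (isClosed_compl_iff.mpr hO))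
  exact (hcl.isCompact.image continuous_fst).isClosed

/-- if `r` is a closed (upper semi-continuous) equivalence relation on a
compactum, then the relation whose classes are the connected components of `r`-classes is
also a closed equivalence relation. -/
theorem components_of_closed_equivalence
    {X : Type*} [MetricSpace X] [CompactSpace X]
    (r : X → X → Prop) (hre : Equivalence r) (hrc : ClosedRel r) :
    Equivalence (fun x y => r x y ∧ y ∈ connectedComponentIn {z | r x z} x) ∧
    ClosedRel (fun x y => r x y ∧ y ∈ connectedComponentIn {z | r x z} x) := by
  have hclass : ∀ x : X, IsClosed {z | r x z} := fun x =>
    hrc.preimage (Continuous.prodMk_right x)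
  constructor
  · constructor
    · intro x
      exact ⟨hre.refl x, mem_connectedComponentIn (hre.refl x)⟩
    · rintro x y ⟨hxy, hy⟩
      have hS : {z | r x z} = {z | r y z} := class_eq_of_rel hre hxy
      refine ⟨hre.symm hxy, ?_⟩
      have h1 : connectedComponentIn {z | r x z} x = connectedComponentIn {z | r x z} y :=
        connectedComponentIn_eq hy
      rw [hS] at h1
      rw [← h1]
      exact mem_connectedComponentIn (hre.symm hxy)
    · rintro x y z ⟨hxy, hy⟩ ⟨hyz, hz⟩
      refine ⟨hre.trans hxy hyz, ?_⟩
      have h1 : connectedComponentIn {w | r x w} x = connectedComponentIn {w | r x w} y :=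
        connectedComponentIn_eq hy
      rw [h1, class_eq_of_rel hre hxy]
      exact hz
  · rw [ClosedRel, ← isOpen_compl_iff]
    rw [isOpen_iff_forall_mem_open]
    rintro ⟨x, y⟩ hxy
    simp only [Set.mem_compl_iff, Set.mem_setOf_eq, not_and] at hxy
    by_cases hr : r x y
    · -- r x y holds but y not in the component of x
      have hy : y ∉ connectedComponentIn {z | r x z} x := hxy hr
      set K : Set X := {z | r x z} with hKdef
      have hKc : IsClosed K := hclass x
      have hxK : x ∈ K := hre.refl x
      have hyK : y ∈ K := hr
      haveI : CompactSpace K := isCompact_iff_compactSpace.mp hKc.isCompact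
      -- pass to the subtype
      have hy' : (⟨y, hyK⟩ : K) ∉ connectedComponent (⟨x, hxK⟩ : K) := by
        intro hmem
        apply hy
        rw [connectedComponentIn_eq_image hxK]
        exact ⟨⟨y, hyK⟩, hmem, rfl⟩
      rw [connectedComponent_eq_iInter_isClopen] at hy'
      rw [Set.mem_iInter] at hy'
      push_neg at hy'
      obtain ⟨⟨Z, hZclopen, hxZ⟩, hyZ⟩ := hy'
      -- U and U' : disjoint compacta covering K
      set U : Set X := Subtype.val '' Z with hUdef
      set U' : Set X := Subtype.val '' Zᶜ with hU'def
      have hUcomp : IsCompact U :=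
        (hZclopen.isClosed.isCompact).image continuous_subtype_val
      have hU'comp : IsCompact U' :=
        ((hZclopen.compl).isClosed.isCompact).image continuous_subtype_val
      have hdisj : Disjoint U U' := by
        rw [Set.disjoint_left]
        rintro a ⟨b, hb, rfl⟩ ⟨c, hc, hcb⟩
        exact hc (Subtype.val_injective hcb ▸ hb)
      obtain ⟨V, W, hVopen, hWopen, hUV, hU'W, hVW⟩ :=
        SeparatedNhds.of_isCompact_isCompact hUcomp hU'comp hdisj
      have hKVW : K ⊆ V ∪ W := by
        intro z hz
        by_cases hzZ : (⟨z, hz⟩ : K) ∈ Z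
        · exact Or.inl (hUV ⟨⟨z, hz⟩, hzZ, rfl⟩)
        · exact Or.inr (hU'W ⟨⟨z, hz⟩, hzZ, rfl⟩)
      set N : Set X := {x' | ∀ z, r x' z → z ∈ V ∪ W} with hNdef
      have hNopen : IsOpen N := usc_open hrc (hVopen.union hWopen)
      have hxN : x ∈ N := fun z hz => hKVW hz
      have hxV : x ∈ V := hUV ⟨⟨x, hxK⟩, hxZ, rfl⟩
      have hyW : y ∈ W := hU'W ⟨⟨y, hyK⟩, hyZ, rfl⟩
      refine ⟨(N ∩ V) ×ˢ W, ?_, ?_, ⟨⟨hxN, hxV⟩, hyW⟩⟩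
      · rintro ⟨x', y'⟩ ⟨⟨hx'N, hx'V⟩, hy'W⟩
        simp only [Set.mem_compl_iff, Set.mem_setOf_eq, not_and]
        intro hr' hy'
        set C := connectedComponentIn {z | r x' z} x' with hCdef
        have hCsub : C ⊆ V ∪ W := fun z hz =>
          hx'N z (connectedComponentIn_subset _ _ hz)
        have hx'C : x' ∈ C := mem_connectedComponentIn (hre.refl x')
        have := isPreconnected_connectedComponentIn (x := x') (F := {z | r x' z})
          V W hVopen hWopen hCsub ⟨x', hx'C, hx'V⟩ ⟨y', hy', hy'W⟩
        obtain ⟨w, _, hwV, hwW⟩ := this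
        exact (Set.disjoint_left.mp hVW hwV) hwW
      · exact (hNopen.inter hVopen).prod hWopen
    · -- ¬ r x y : use openness of the complement of the graph of r
      refine ⟨{p : X × X | r p.1 p.2}ᶜ, ?_, hrc.isOpen_compl, hr⟩
      rintro ⟨a, b⟩ hab
      simp only [Set.mem_compl_iff, Set.mem_setOf_eq, not_and] at hab ⊢
      intro h; exact absurd h hab
end

section
/- Let X be a planar compactum, A the family of its limit continua, and (∼_α) the transfinite sequence of equivalence relations: x ∼_0 y iff x and y lie in a connected finite union of limit continua; for successor α = β+1, x ∼_α y iff x and y are joined by a continuum which is a finite union of Hausdorff limits of sequences of ∼_β-classes; for limit α, ∼_α = ⋃_{β<α} ∼_β. Then the sequence stabilizes at the first uncountable ordinal Ω, i.e. ∼_Ω = ∼_{Ω+1}. -/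
open Set Filter Metric Topology Function

/-- The class of `z` under the relation `r`. -/
def classOf {E : Type*} (r : E → E → Prop) (z : E) : Set E := {w | r z w}

/-- The relation `∼₀`: `x ∼₀ y` iff `x` and `y` lie in a connected finite union of limit
continua of `X` (together with the identity, making the relation reflexive). -/
def rel0 (X : Set ℂ) : ℂ → ℂ → Prop := fun x y =>
  x = y ∨ ∃ (n : ℕ) (F : Fin n → Set ℂ),
    (∀ i, LimContIn X (F i)) ∧ IsConnected (⋃ i, F i) ∧
    x ∈ ⋃ i, F i ∧ y ∈ ⋃ i, F i

/-- The successor step: `x ∼_{β+1} y` iff `x` and `y` are joined by a continuum which is a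
finite union of Hausdorff limits of sequences of (closures of) `∼_β`-classes. -/
def succRel (X : Set ℂ) (r : ℂ → ℂ → Prop) : ℂ → ℂ → Prop := fun x y =>
  x = y ∨ ∃ (n : ℕ) (L : Fin n → Set ℂ),
    (∀ i, ∃ K : ℕ → Set ℂ, (∀ m, ∃ z ∈ X, K m = classOf r z) ∧
      Tendsto (fun m => EMetric.hausdorffEdist (closure (K m)) (L i)) atTop (nhds 0)) ∧
    IsCompact (⋃ i, L i) ∧ IsConnected (⋃ i, L i) ∧
    x ∈ ⋃ i, L i ∧ y ∈ ⋃ i, L i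

/-- The transfinite sequence `(∼_α)` of relations generated by the limit continua of `X`. -/
noncomputable def seqRel (X : Set ℂ) : Ordinal → (ℂ → ℂ → Prop) := fun o =>
  Ordinal.limitRecOn o (rel0 X) (fun _ r => succRel X r)
    (fun o _ ih => fun x y => ∃ (β : Ordinal) (h : β < o), ih β h x y)

/-! ### Auxiliary machinery -/

section Aux

universe u

variable {X : Set ℂ}

/-- The combined invariant carried through the transfinite induction. -/
def GoodRel (X : Set ℂ) (r : ℂ → ℂ → Prop) : Prop :=
  Equivalence r ∧ (∀ x y, r x y → x ≠ y → x ∈ X ∧ y ∈ X) ∧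
  (∀ x y, r x y → x ≠ y →
    ∃ S : Set ℂ, IsPreconnected S ∧ x ∈ S ∧ y ∈ S ∧ ∀ w ∈ S, r x w)

lemma mem_classOf_iff {r : ℂ → ℂ → Prop} {z w : ℂ} : w ∈ classOf r z ↔ r z w := Iff.rfl

lemma classOf_subset_of_good (hG : GoodRel X r) {z : ℂ} (hz : z ∈ X) :
    classOf r z ⊆ X := by
  intro w hw
  by_cases h : z = w
  · exact h ▸ hz
  · exact (hG.2.1 z w hw h).2

lemma classOf_mono {r r' : ℂ → ℂ → Prop} (h : ∀ x y, r x y → r' x y) (z : ℂ) :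
    classOf r z ⊆ classOf r' z := fun w hw => h z w hw

lemma isConnected_classOf (hG : GoodRel X r) (z : ℂ) : IsConnected (classOf r z) := by
  refine ⟨⟨z, hG.1.refl z⟩, ?_⟩
  have hcls : classOf r z =
      ⋃₀ (insert {z} {S : Set ℂ | IsPreconnected S ∧ z ∈ S ∧ S ⊆ classOf r z}) := by
    ext w
    constructor
    · intro hw
      by_cases h : z = w
      · exact ⟨{z}, mem_insert _ _, by simp [h]⟩
      · obtain ⟨S, hS, hzS, hwS, hsub⟩ := hG.2.2 z w hw h
        exact ⟨S, Or.inr ⟨hS, hzS, fun u hu => hsub u hu⟩, hwS⟩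
    · rintro ⟨S, hS, hwS⟩
      rcases hS with rfl | ⟨-, -, hsub⟩
      · have hwz : w = z := mem_singleton_iff.1 hwS
        subst hwz
        exact hG.1.refl w
      · exact hsub hwS
  rw [hcls]
  refine isPreconnected_sUnion z _ ?_ ?_
  · rintro S (rfl | ⟨-, hzS, -⟩)
    · exact rfl
    · exact hzS
  · rintro S (rfl | ⟨hS, -, -⟩)
    · exact isPreconnected_singleton
    · exact hS

lemma fin_union_append {n m : ℕ} (F : Fin n → Set ℂ) (G : Fin m → Set ℂ) :
    (⋃ i, Fin.append F G i) = (⋃ i, F i) ∪ ⋃ i, G i := by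
  apply subset_antisymm
  · refine iUnion_subset fun i => ?_
    refine Fin.addCases (fun j => ?_) (fun j => ?_) i
    · simp only [Fin.append_left]
      exact (subset_iUnion F j).trans subset_union_left
    · simp only [Fin.append_right]
      exact (subset_iUnion G j).trans subset_union_right
  · refine union_subset (iUnion_subset fun j => ?_) (iUnion_subset fun j => ?_)
    · rw [← Fin.append_left F G j]; exact subset_iUnion _ _
    · rw [← Fin.append_right F G j]; exact subset_iUnion _ _

lemma fin_combine {n m : ℕ} (Q : Set ℂ → Prop) (F : Fin n → Set ℂ) (G : Fin m → Set ℂ)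
    (hF : ∀ i, Q (F i)) (hG : ∀ i, Q (G i)) :
    ∃ (k : ℕ) (H : Fin k → Set ℂ), (∀ i, Q (H i)) ∧
      (⋃ i, H i) = (⋃ i, F i) ∪ ⋃ i, G i := by
  refine ⟨n + m, Fin.append F G, fun i => ?_, fin_union_append F G⟩
  refine Fin.addCases (fun j => ?_) (fun j => ?_) i
  · simp only [Fin.append_left]; exact hF j
  · simp only [Fin.append_right]; exact hG j

lemma good_rel0 : GoodRel X (rel0 X) := by
  refine ⟨⟨fun x => Or.inl rfl, ?_, ?_⟩, ?_, ?_⟩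
  · rintro x y (rfl | ⟨n, F, h1, h2, hx, hy⟩)
    · exact Or.inl rfl
    · exact Or.inr ⟨n, F, h1, h2, hy, hx⟩
  · rintro x y z (rfl | ⟨n, F, h1, h2, hx, hy⟩) hyz
    · exact hyz
    · rcases hyz with rfl | ⟨m, G, g1, g2, hy', hz⟩
      · exact Or.inr ⟨n, F, h1, h2, hx, hy⟩
      · obtain ⟨k, H, hH, hU⟩ := fin_combine (LimContIn X) F G h1 g1
        refine Or.inr ⟨k, H, hH, ?_, ?_, ?_⟩
        · rw [hU]; exact h2.union ⟨y, hy, hy'⟩ g2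
        · rw [hU]; exact Or.inl hx
        · rw [hU]; exact Or.inr hz
  · rintro x y (rfl | ⟨n, F, h1, h2, hx, hy⟩) hne
    · exact absurd rfl hne
    · have hsub : (⋃ i, F i) ⊆ X := iUnion_subset fun i => (h1 i).1.1
      exact ⟨hsub hx, hsub hy⟩
  · rintro x y (rfl | ⟨n, F, h1, h2, hx, hy⟩) hne
    · exact absurd rfl hne
    · exact ⟨⋃ i, F i, h2.isPreconnected, hx, hy,
        fun w hw => Or.inr ⟨n, F, h1, h2, hx, hw⟩⟩

lemma succRel_subset_X (hX : IsCompact X) (hG : GoodRel X r)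
    {n : ℕ} {L : Fin n → Set ℂ}
    (hL : ∀ i, ∃ K : ℕ → Set ℂ, (∀ m, ∃ z ∈ X, K m = classOf r z) ∧
      Tendsto (fun m => EMetric.hausdorffEdist (closure (K m)) (L i)) atTop (nhds 0)) :
    (⋃ i, L i) ⊆ X := by
  refine iUnion_subset fun i p hp => ?_
  obtain ⟨K, hKcl, hKt⟩ := hL i
  have hbound : ∀ m, EMetric.infEdist p X ≤
      EMetric.hausdorffEdist (closure (K m)) (L i) := by
    intro m
    obtain ⟨z, hz, hKz⟩ := hKcl m
    have hKX : closure (K m) ⊆ X := by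
      rw [hKz]
      exact closure_minimal (classOf_subset_of_good hG hz) hX.isClosed
    calc EMetric.infEdist p X ≤ EMetric.infEdist p (closure (K m)) :=
          EMetric.infEdist_anti hKX
      _ ≤ EMetric.hausdorffEdist (L i) (closure (K m)) :=
          EMetric.infEdist_le_hausdorffEdist_of_mem hp
      _ = EMetric.hausdorffEdist (closure (K m)) (L i) :=
          EMetric.hausdorffEdist_comm
  have h0 : EMetric.infEdist p X ≤ 0 := ge_of_tendsto' hKt hbound
  have h0' : EMetric.infEdist p X = 0 := le_antisymm h0 zero_le
  exact (EMetric.mem_iff_infEdist_zero_of_closed hX.isClosed).2 h0'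

lemma good_succRel (hX : IsCompact X) (hG : GoodRel X r) :
    GoodRel X (succRel X r) := by
  refine ⟨⟨fun x => Or.inl rfl, ?_, ?_⟩, ?_, ?_⟩
  · rintro x y (rfl | ⟨n, L, h1, h2, h3, hx, hy⟩)
    · exact Or.inl rfl
    · exact Or.inr ⟨n, L, h1, h2, h3, hy, hx⟩
  · rintro x y z (rfl | ⟨n, L, h1, h2, h3, hx, hy⟩) hyz
    · exact hyz
    · rcases hyz with rfl | ⟨m, M, g1, g2, g3, hy', hz⟩
      · exact Or.inr ⟨n, L, h1, h2, h3, hx, hy⟩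
      · obtain ⟨k, H, hH, hU⟩ := fin_combine
          (fun C => ∃ K : ℕ → Set ℂ, (∀ m, ∃ z ∈ X, K m = classOf r z) ∧
            Tendsto (fun m => EMetric.hausdorffEdist (closure (K m)) C) atTop (nhds 0))
          L M h1 g1
        refine Or.inr ⟨k, H, hH, ?_, ?_, ?_, ?_⟩
        · rw [hU]; exact h2.union g2
        · rw [hU]; exact h3.union ⟨y, hy, hy'⟩ g3
        · rw [hU]; exact Or.inl hx
        · rw [hU]; exact Or.inr hz
  · rintro x y (rfl | ⟨n, L, h1, h2, h3, hx, hy⟩) hne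
    · exact absurd rfl hne
    · have hsub := succRel_subset_X hX hG h1
      exact ⟨hsub hx, hsub hy⟩
  · rintro x y (rfl | ⟨n, L, h1, h2, h3, hx, hy⟩) hne
    · exact absurd rfl hne
    · exact ⟨⋃ i, L i, h3.isPreconnected, hx, hy,
        fun w hw => Or.inr ⟨n, L, h1, h2, h3, hx, hw⟩⟩

lemma le_succRel (hX : IsCompact X) (hG : GoodRel X r) {x y : ℂ} (hxy : r x y) :
    succRel X r x y := by
  by_cases hne : x = y
  · exact Or.inl hne
  · have hx : x ∈ X := (hG.2.1 x y hxy hne).1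
    set C : Set ℂ := classOf r x with hC
    have hCX : C ⊆ X := classOf_subset_of_good hG hx
    have hclX : closure C ⊆ X := closure_minimal hCX hX.isClosed
    refine Or.inr ⟨1, fun _ => closure C, fun i => ⟨fun _ => C, fun m => ⟨x, hx, rfl⟩, ?_⟩,
      ?_, ?_, ?_, ?_⟩
    · have heq : (fun _ : ℕ => EMetric.hausdorffEdist (closure C) (closure C)) =
          fun _ : ℕ => (0 : ENNReal) := by
        funext m; exact EMetric.hausdorffEdist_self
      rw [heq]; exact tendsto_const_nhds
    · rw [iUnion_const]
      exact hX.of_isClosed_subset isClosed_closure hclX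
    · rw [iUnion_const]
      exact ⟨⟨x, subset_closure (hG.1.refl x)⟩,
        (isConnected_classOf hG x).isPreconnected.closure⟩
    · exact mem_iUnion.2 ⟨0, subset_closure (hG.1.refl x)⟩
    · exact mem_iUnion.2 ⟨0, subset_closure hxy⟩

lemma seqRel_zero (X : Set ℂ) : seqRel X 0 = rel0 X :=
  Ordinal.limitRecOn_zero _ _ _

lemma seqRel_succ (X : Set ℂ) (o : Ordinal) :
    seqRel X (Order.succ o) = succRel X (seqRel X o) :=
  Ordinal.limitRecOn_succ _ _ _ _

lemma seqRel_limit (X : Set ℂ) {o : Ordinal} (ho : Order.IsSuccLimit o) :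
    seqRel X o = fun x y => ∃ β, ∃ _ : β < o, seqRel X β x y :=
  Ordinal.limitRecOn_limit (motive := fun _ => ℂ → ℂ → Prop) o (rel0 X) (fun _ r => succRel X r)
    (fun o _ ih => fun x y => ∃ (β : Ordinal) (h : β < o), ih β h x y) ho

lemma seqRel_limit_iff (X : Set ℂ) {o : Ordinal} (ho : Order.IsSuccLimit o) (x y : ℂ) :
    seqRel X o x y ↔ ∃ β, ∃ _ : β < o, seqRel X β x y := by
  rw [seqRel_limit X ho]

/-- The main transfinite induction: every `seqRel X o` satisfies the invariant, and the
sequence of relations is monotone. -/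
lemma seqRel_good_and_mono (hX : IsCompact X) :
    ∀ o : Ordinal, GoodRel X (seqRel X o) ∧
      ∀ β, β < o → ∀ x y, seqRel X β x y → seqRel X o x y := by
  intro o
  induction o using Ordinal.induction with
  | _ o IH =>
    rcases Ordinal.zero_or_succ_or_isSuccLimit o with rfl | ⟨a, rfl⟩ | ho
    · rw [seqRel_zero]
      exact ⟨good_rel0, fun β hβ => absurd hβ (by simp : ¬ β < 0)⟩
    · have ha : a < Order.succ a := Order.lt_succ a
      have IHa := IH a ha
      rw [seqRel_succ]
      refine ⟨good_succRel hX IHa.1, fun β hβ x y hxy => ?_⟩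
      have hβa : β ≤ a := Order.lt_succ_iff.1 hβ
      have hx : seqRel X a x y := by
        rcases lt_or_eq_of_le hβa with h | rfl
        · exact IHa.2 β h x y hxy
        · exact hxy
      exact le_succRel hX IHa.1 hx
    · have hiff := seqRel_limit_iff X ho
      have hmono : ∀ β γ, β ≤ γ → γ < o → ∀ x y, seqRel X β x y → seqRel X γ x y := by
        intro β γ hβγ hγ x y h
        rcases lt_or_eq_of_le hβγ with h' | rfl
        · exact (IH γ hγ).2 β h' x y h
        · exact h
      refine ⟨⟨⟨?_, ?_, ?_⟩, ?_, ?_⟩, ?_⟩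
      · intro x
        refine (hiff x x).2 ⟨0, ho.pos, ?_⟩
        rw [seqRel_zero]; exact Or.inl rfl
      · intro x y h
        obtain ⟨β, hβ, h⟩ := (hiff x y).1 h
        exact (hiff y x).2 ⟨β, hβ, (IH β hβ).1.1.symm h⟩
      · intro x y z h1 h2
        obtain ⟨β, hβ, h1⟩ := (hiff x y).1 h1
        obtain ⟨γ, hγ, h2⟩ := (hiff y z).1 h2
        have hδ : max β γ < o := max_lt hβ hγ
        have m1 : seqRel X (max β γ) x y := hmono β _ (le_max_left _ _) hδ x y h1
        have m2 : seqRel X (max β γ) y z := hmono γ _ (le_max_right _ _) hδ y z h2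
        exact (hiff x z).2 ⟨max β γ, hδ, (IH _ hδ).1.1.trans m1 m2⟩
      · intro x y h hne
        obtain ⟨β, hβ, h⟩ := (hiff x y).1 h
        exact (IH β hβ).1.2.1 x y h hne
      · intro x y h hne
        obtain ⟨β, hβ, h⟩ := (hiff x y).1 h
        obtain ⟨S, hS, hxS, hyS, hsub⟩ := (IH β hβ).1.2.2 x y h hne
        exact ⟨S, hS, hxS, hyS, fun w hw => (hiff x w).2 ⟨β, hβ, hsub w hw⟩⟩
      · intro β hβ x y h
        exact (hiff x y).2 ⟨β, hβ, h⟩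

lemma seqRel_mono_le (hX : IsCompact X) {β γ : Ordinal} (h : β ≤ γ) {x y : ℂ}
    (hxy : seqRel X β x y) : seqRel X γ x y := by
  rcases lt_or_eq_of_le h with h' | rfl
  · exact (seqRel_good_and_mono hX γ).2 β h' x y hxy
  · exact hxy

/-- Per-point stabilization of the closures of the classes below `ω₁`. -/
lemma classOf_stab (hX : IsCompact X) (w : ℂ) :
    ∃ β : Ordinal.{u}, β < (Cardinal.aleph.{u} 1).ord ∧
      ∀ γ, β ≤ γ → γ ≤ (Cardinal.aleph.{u} 1).ord →
        closure (classOf (seqRel X γ) w) =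
          closure (classOf (seqRel X ((Cardinal.aleph.{u} 1).ord)) w) := by
  have hlim : Order.IsSuccLimit ((Cardinal.aleph.{u} 1).ord) :=
    Cardinal.isSuccLimit_ord (Cardinal.aleph0_le_aleph 1)
  obtain ⟨b, hbc, -, hbb⟩ := TopologicalSpace.exists_countable_basis ℂ
  haveI : Countable b := hbc.to_subtype
  have hchoice : ∀ t : {B : b //
      ((B : Set ℂ) ∩ classOf (seqRel X ((Cardinal.aleph.{u} 1).ord)) w).Nonempty},
      ∃ βu : Ordinal × ℂ, βu.1 < (Cardinal.aleph.{u} 1).ord ∧ βu.2 ∈ ((t : b) : Set ℂ) ∧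
        seqRel X βu.1 w βu.2 := by
    rintro ⟨B, u, huB, huC⟩
    have h' : seqRel X ((Cardinal.aleph.{u} 1).ord) w u := huC
    rw [seqRel_limit_iff X hlim] at h'
    obtain ⟨β, hβ, hβ'⟩ := h'
    exact ⟨⟨β, u⟩, hβ, huB, hβ'⟩
  choose f hf1 hf2 hf3 using hchoice
  refine ⟨⨆ t, (f t).1, ?_, ?_⟩
  · refine Cardinal.iSup_lt_ord_lift_of_isRegular Cardinal.isRegular_aleph_one ?_ hf1
    exact ((Cardinal.lift_le.2 Cardinal.mk_le_aleph0).trans_eq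
      Cardinal.lift_aleph0).trans_lt Cardinal.aleph0_lt_aleph_one
  intro γ hβγ hγΩ
  apply le_antisymm
  · apply closure_mono
    apply classOf_mono
    intro x y h
    exact seqRel_mono_le hX hγΩ h
  · refine closure_minimal ?_ isClosed_closure
    intro u hu
    rw [hbb.mem_closure_iff]
    intro B hB huB
    have hne : ((B : Set ℂ) ∩ classOf (seqRel X ((Cardinal.aleph.{u} 1).ord)) w).Nonempty :=
      ⟨u, huB, hu⟩
    refine ⟨(f ⟨⟨B, hB⟩, hne⟩).2, hf2 ⟨⟨B, hB⟩, hne⟩, ?_⟩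
    have hfle : (f ⟨⟨B, hB⟩, hne⟩).1 ≤ γ :=
      le_trans (Ordinal.le_iSup (fun t => (f t).1) ⟨⟨B, hB⟩, hne⟩) hβγ
    exact seqRel_mono_le hX hfle (hf3 ⟨⟨B, hB⟩, hne⟩)

lemma seqRel_stabilizes_aux (X : Set ℂ) (hX : IsCompact X) :
    seqRel X ((Cardinal.aleph.{u} 1).ord) = seqRel X ((Cardinal.aleph.{u} 1).ord + 1) := by
  have hlim : Order.IsSuccLimit ((Cardinal.aleph.{u} 1).ord) :=
    Cardinal.isSuccLimit_ord (Cardinal.aleph0_le_aleph 1)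
  have hGood : GoodRel X (seqRel X ((Cardinal.aleph.{u} 1).ord)) :=
    (seqRel_good_and_mono hX ((Cardinal.aleph.{u} 1).ord)).1
  have hsucc : seqRel X ((Cardinal.aleph.{u} 1).ord + 1) =
      succRel X (seqRel X ((Cardinal.aleph.{u} 1).ord)) := by
    rw [Ordinal.add_one_eq_succ, seqRel_succ]
  rw [hsucc]
  funext x y
  apply propext
  constructor
  · exact fun h => le_succRel hX hGood h
  · rintro (rfl | ⟨n, L, hL, hcpt, hconn, hx, hy⟩)
    · exact hGood.1.refl x
    · -- choose the classes and their base points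
      choose K hKcl hKt using hL
      choose z hzX hzcl using hKcl
      -- per-point stabilization ordinals
      choose g hg1 hg2 using fun p : Fin n × ℕ => classOf_stab hX (z p.1 p.2)
      have hβΩ : (⨆ p : Fin n × ℕ, g p) < (Cardinal.aleph.{u} 1).ord := by
        refine Cardinal.iSup_lt_ord_lift_of_isRegular Cardinal.isRegular_aleph_one ?_ hg1
        exact ((Cardinal.lift_le.2 Cardinal.mk_le_aleph0).trans_eq
          Cardinal.lift_aleph0).trans_lt Cardinal.aleph0_lt_aleph_one
      have hsβ : Order.succ (⨆ p : Fin n × ℕ, g p) < (Cardinal.aleph.{u} 1).ord :=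
        hlim.succ_lt hβΩ
      refine (seqRel_limit_iff X hlim x y).2 ⟨Order.succ (⨆ p : Fin n × ℕ, g p), hsβ, ?_⟩
      rw [seqRel_succ]
      refine Or.inr ⟨n, L, fun i => ?_, hcpt, hconn, hx, hy⟩
      refine ⟨fun m => classOf (seqRel X (⨆ p : Fin n × ℕ, g p)) (z i m),
        fun m => ⟨z i m, hzX i m, rfl⟩, ?_⟩
      have hcl : ∀ m, closure (classOf (seqRel X (⨆ p : Fin n × ℕ, g p)) (z i m)) =
          closure (K i m) := by
        intro m
        rw [hzcl i m]
        exact hg2 (i, m) _ (Ordinal.le_iSup (fun p : Fin n × ℕ => g p) (i, m)) hβΩ.le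
      have heq : (fun m => EMetric.hausdorffEdist
            (closure (classOf (seqRel X (⨆ p : Fin n × ℕ, g p)) (z i m))) (L i)) =
          fun m => EMetric.hausdorffEdist (closure (K i m)) (L i) := by
        funext m; rw [hcl m]
      rw [heq]
      exact hKt i

lemma seqRel_lift (X : Set ℂ) : ∀ o : Ordinal.{u},
    seqRel X (Ordinal.lift.{v} o) = seqRel X o := by
  intro o
  induction o using Ordinal.induction with
  | _ o IH =>
    rcases Ordinal.zero_or_succ_or_isSuccLimit o with rfl | ⟨a, rfl⟩ | ho
    · rw [Ordinal.lift_zero, seqRel_zero, seqRel_zero]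
    · rw [Ordinal.lift_succ, seqRel_succ, seqRel_succ, IH a (Order.lt_succ a)]
    · have hlift : Order.IsSuccLimit (Ordinal.lift.{v} o) := Ordinal.isSuccLimit_lift.2 ho
      funext x y
      apply propext
      rw [seqRel_limit_iff X hlift, seqRel_limit_iff X ho]
      constructor
      · rintro ⟨β, hβ, h⟩
        obtain ⟨β', hβ', rfl⟩ := Ordinal.lt_lift_iff.1 hβ
        exact ⟨β', hβ', (IH β' hβ').symm ▸ h⟩
      · rintro ⟨β, hβ, h⟩
        refine ⟨Ordinal.lift.{v} β, Ordinal.lift_lt.2 hβ, ?_⟩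
        rw [IH β hβ]
        exact h

lemma seqRel_lift_omega1 (X : Set ℂ) :
    seqRel X ((Cardinal.aleph.{max u v} 1).ord) = seqRel X ((Cardinal.aleph.{u} 1).ord) := by
  have h : Ordinal.lift.{v} ((Cardinal.aleph.{u} 1).ord) = (Cardinal.aleph.{max u v} 1).ord := by
    rw [Cardinal.lift_ord, Cardinal.lift_aleph, Ordinal.lift_one]
  rw [← h, seqRel_lift]

lemma seqRel_lift_omega1_succ (X : Set ℂ) :
    seqRel X ((Cardinal.aleph.{max u v} 1).ord + 1) =
      seqRel X ((Cardinal.aleph.{u} 1).ord + 1) := by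
  have h : Ordinal.lift.{v} ((Cardinal.aleph.{u} 1).ord + 1) =
      (Cardinal.aleph.{max u v} 1).ord + 1 := by
    rw [Ordinal.add_one_eq_succ, Ordinal.lift_succ, Cardinal.lift_ord, Cardinal.lift_aleph,
      Ordinal.lift_one, Ordinal.add_one_eq_succ]
  rw [← h, seqRel_lift]

end Aux

/-- the transfinite sequence `(∼_α)` stabilizes at the first uncountable
ordinal `Ω`. -/
theorem seqRel_stabilizes (X : Set ℂ) (hX : IsCompact X) :
    seqRel X ((Cardinal.aleph 1).ord) = seqRel X ((Cardinal.aleph 1).ord + 1) := by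
  rw [← seqRel_lift_omega1.{u_1, u_2} X, ← seqRel_lift_omega1_succ.{u_2, u_1} X]
  exact seqRel_stabilizes_aux.{max u_1 u_2} X hX
end
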